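/- arXiv:1105.2794 — 2 statements merged into one kernel-verified Lean document; each statement's English description precedes it below -/
import Mathlib

section
/- Fix an integer g ≥ 1, integers n_1,…,n_g ≥ 2, and set e_g = 1, e_{j-1} = n_j·e_j. Fix an index k with 1 ≤ k ≤ g and positive integers p_j, q_j for k ≤ j ≤ g with q_k/p_k ≥ 2/n_k. Define b_k = p_k + q_k, B_k = e_{k-1}·q_k, and recursively b_{j} = p_j·b_{j-1} + q_j, B_j = p_j·B_{j-1} + e_{j-1}·q_j for k < j ≤ g. Then b_k/B_k ≤ b_j/B_j for all k ≤ j ≤ g. -/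
theorem lemma_one (g k : ℕ) (hg : 1 ≤ g) (hk : 1 ≤ k) (hkg : k ≤ g)
    (n e : ℕ → ℕ)
    (hn : ∀ j, 1 ≤ j → j ≤ g → 2 ≤ n j)
    (heg : e g = 1)
    (he : ∀ j, 1 ≤ j → j ≤ g → e (j - 1) = n j * e j)
    (p q : ℕ → ℕ)
    (hp : ∀ j, k ≤ j → j ≤ g → 0 < p j)
    (hq : ∀ j, k ≤ j → j ≤ g → 0 < q j)
    (hstart : (q k : ℚ) / p k ≥ 2 / n k)
    (b B : ℕ → ℕ)
    (hbk : b k = p k + q k) (hBk : B k = e (k - 1) * q k)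
    (hb : ∀ j, k < j → j ≤ g → b j = p j * b (j - 1) + q j)
    (hB : ∀ j, k < j → j ≤ g → B j = p j * B (j - 1) + e (j - 1) * q j) :
    ∀ j, k ≤ j → j ≤ g → (b k : ℚ) / B k ≤ (b j : ℚ) / B j := by
  -- positivity of e on [0, g]
  have epos : ∀ d, d ≤ g → 0 < e (g - d) := by
    intro d
    induction d with
    | zero => intro _; simp [heg]
    | succ d ih =>
      intro hd
      have hd' : d ≤ g := Nat.le_of_succ_le hd
      have h1 : 1 ≤ g - d := by omega
      have := he (g - d) h1 (by omega)
      have : e (g - (d+1)) = n (g - d) * e (g - d) := by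
        have : g - (d+1) = (g - d) - 1 := by omega
        rw [this]; exact he (g - d) h1 (by omega)
      rw [this]
      have := hn (g - d) h1 (by omega)
      exact Nat.mul_pos (by omega) (ih hd')
  have epos' : ∀ m, m ≤ g → 0 < e m := by
    intro m hm
    have := epos (g - m) (by omega)
    rwa [show g - (g - m) = m by omega] at this
  -- e is antitone on [k, g]
  have emono : ∀ m, k ≤ m → m ≤ g → e m ≤ e k := by
    intro m
    induction m with
    | zero => intro h _; omega
    | succ m ih =>
      intro hkm hmg
      rcases Nat.eq_or_lt_of_le hkm with h | h
      · rw [h]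
      · have hkm' : k ≤ m := by omega
        have hmg' : m ≤ g := by omega
        have heq : e m = n (m+1) * e (m+1) := by
          have := he (m+1) (by omega) hmg
          simpa using this
        have hn1 : 2 ≤ n (m+1) := hn (m+1) (by omega) hmg
        have hle : e (m+1) ≤ e m := by
          rw [heq]
          calc e (m+1) = 1 * e (m+1) := by ring
          _ ≤ n (m+1) * e (m+1) := Nat.mul_le_mul_right _ (by omega)
        exact le_trans hle (ih hkm' hmg')
  -- key inequality: p k + q k ≤ n k * q k
  have hpk : 0 < p k := hp k le_rfl hkg
  have hqk : 0 < q k := hq k le_rfl hkg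
  have hnk : 2 ≤ n k := hn k hk hkg
  have hkey : p k + q k ≤ n k * q k := by
    have h2 : 2 * p k ≤ n k * q k := by
      have hppos : (0:ℚ) < p k := by exact_mod_cast hpk
      have hnpos : (0:ℚ) < n k := by exact_mod_cast (by omega : 0 < n k)
      rw [ge_iff_le, div_le_div_iff₀ hnpos hppos] at hstart
      have : (2:ℚ) * p k ≤ n k * q k := by linarith
      exact_mod_cast this
    rcases le_total (q k) (p k) with h | h
    · omega
    · have : 2 * q k ≤ n k * q k := Nat.mul_le_mul_right _ hnk
      omega
  have hekk : e (k-1) = n k * e k := he k hk hkg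
  have hBkpos : 0 < B k := by
    rw [hBk, hekk]
    exact Nat.mul_pos (Nat.mul_pos (by omega) (epos' k hkg)) hqk
  -- b k * e j ≤ B k for k ≤ j ≤ g
  have hbe : ∀ j, k ≤ j → j ≤ g → b k * e j ≤ B k := by
    intro j hkj hjg
    calc b k * e j ≤ b k * e k := Nat.mul_le_mul_left _ (emono j hkj hjg)
    _ = (p k + q k) * e k := by rw [hbk]
    _ ≤ (n k * q k) * e k := Nat.mul_le_mul_right _ hkey
    _ = B k := by rw [hBk, hekk]; ring
  -- positivity of B
  have hBpos : ∀ j, k ≤ j → j ≤ g → 0 < B j := by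
    intro j hkj
    induction j, hkj using Nat.le_induction with
    | base => intro _; exact hBkpos
    | succ m hkm ih =>
      intro hmg
      have hmg' : m ≤ g := by omega
      rw [show B (m+1) = p (m+1) * B ((m+1)-1) + e ((m+1)-1) * q (m+1) from
        hB (m+1) (by omega) hmg]
      simp only [Nat.add_sub_cancel]
      have := Nat.mul_pos (hp (m+1) (by omega) hmg) (ih hmg')
      omega
  -- main nat inequality
  have hmain : ∀ j, k ≤ j → j ≤ g → b k * B j ≤ b j * B k := by
    intro j hkj
    induction j, hkj using Nat.le_induction with
    | base => intro _; rw [Nat.mul_comm]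
    | succ m hkm ih =>
      intro hmg
      have hmg' : m ≤ g := by omega
      have hBm := hB (m+1) (by omega) hmg
      have hbm := hb (m+1) (by omega) hmg
      simp only [Nat.add_sub_cancel] at hBm hbm
      rw [hBm, hbm]
      have h1 : b k * (e m * q (m+1)) ≤ q (m+1) * B k := by
        calc b k * (e m * q (m+1)) = (b k * e m) * q (m+1) := by ring
        _ ≤ B k * q (m+1) := Nat.mul_le_mul_right _ (hbe m hkm hmg')
        _ = q (m+1) * B k := Nat.mul_comm _ _
      have h2 : p (m+1) * (b k * B m) ≤ p (m+1) * (b m * B k) :=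
        Nat.mul_le_mul_left _ (ih hmg')
      calc b k * (p (m+1) * B m + e m * q (m+1))
          = p (m+1) * (b k * B m) + b k * (e m * q (m+1)) := by ring
        _ ≤ p (m+1) * (b m * B k) + q (m+1) * B k := Nat.add_le_add h2 h1
        _ = (p (m+1) * b m + q (m+1)) * B k := by ring
  intro j hkj hjg
  have hBj := hBpos j hkj hjg
  have hBkQ : (0:ℚ) < B k := by exact_mod_cast hBkpos
  have hBjQ : (0:ℚ) < B j := by exact_mod_cast hBj
  rw [div_le_div_iff₀ hBkQ hBjQ]
  exact_mod_cast hmain j hkj hjg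
end

section
/- Fix an integer g ≥ 2, integers n_1,…,n_g ≥ 2, and set e_g = 1, e_{j-1} = n_j·e_j. Fix k with 1 ≤ k ≤ g−1. Set b_k = 1 + n_k, B_k = e_{k-1} (corresponding to first entry equal to 1/n_k). Let p_j, q_j be positive integers for k+1 ≤ j ≤ g and define recursively b_j = p_j·b_{j-1} + q_j, B_j = p_j·B_{j-1} + e_{j-1}·q_j. Then b_{k+1}/B_{k+1} ≤ b_j/B_j for all k+1 ≤ j ≤ g. -/
theorem lemma_two (g k : ℕ) (hg : 2 ≤ g) (hk : 1 ≤ k) (hkg : k ≤ g - 1)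
    (n e : ℕ → ℕ)
    (hn : ∀ j, 1 ≤ j → j ≤ g → 2 ≤ n j)
    (heg : e g = 1)
    (he : ∀ j, 1 ≤ j → j ≤ g → e (j - 1) = n j * e j)
    (p q : ℕ → ℕ)
    (hp : ∀ j, k + 1 ≤ j → j ≤ g → 0 < p j)
    (hq : ∀ j, k + 1 ≤ j → j ≤ g → 0 < q j)
    (b B : ℕ → ℕ)
    (hbk : b k = 1 + n k) (hBk : B k = e (k - 1))
    (hb : ∀ j, k + 1 ≤ j → j ≤ g → b j = p j * b (j - 1) + q j)
    (hB : ∀ j, k + 1 ≤ j → j ≤ g → B j = p j * B (j - 1) + e (j - 1) * q j) :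
    ∀ j, k + 1 ≤ j → j ≤ g → (b (k + 1) : ℚ) / B (k + 1) ≤ (b j : ℚ) / B j := by
  have hk1g : k + 1 ≤ g := by omega
  -- positivity of e
  have hepos_aux : ∀ d, d ≤ g → 0 < e (g - d) := by
    intro d
    induction d with
    | zero => intro _; simpa [heg]
    | succ m ih =>
      intro hm
      have h1 : 1 ≤ g - m := by omega
      have h2 : g - m ≤ g := by omega
      have := he (g - m) h1 h2
      have hrw : g - (m + 1) = (g - m) - 1 := by omega
      rw [hrw, this]
      have := hn (g - m) h1 h2
      have := ih (by omega)
      positivity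
  have hepos : ∀ j, j ≤ g → 0 < e j := by
    intro j hj
    have : j = g - (g - j) := by omega
    rw [this]
    exact hepos_aux (g - j) (by omega)
  -- antitonicity of e on [0, g]
  have hemono : ∀ c a, a ≤ c → c ≤ g → e c ≤ e a := by
    intro c
    induction c with
    | zero => intro a ha _; simp [Nat.le_zero.mp ha]
    | succ m ih =>
      intro a ha hcg
      rcases Nat.eq_or_lt_of_le ha with h | h
      · rw [h]
      · have ham : a ≤ m := by omega
        have hstep : e (m + 1) ≤ e m := by
          have := he (m + 1) (by omega) hcg
          simp only [Nat.add_sub_cancel] at this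
          have hn2 := hn (m + 1) (by omega) hcg
          nlinarith [hepos (m + 1) hcg]
        exact le_trans hstep (ih a ham (by omega))
  -- key inequality: b (k+1) * e (k+1) ≤ B (k+1)
  have key : b (k + 1) * e (k + 1) ≤ B (k + 1) := by
    have hB1 := hB (k + 1) le_rfl hk1g
    have hb1 := hb (k + 1) le_rfl hk1g
    simp only [Nat.add_sub_cancel] at hB1 hb1
    have hek1 : e (k - 1) = n k * e k := he k hk (by omega)
    have hek : e k = n (k + 1) * e (k + 1) := by
      have := he (k + 1) (by omega) hk1g
      simpa using this
    have hnk := hn k hk (by omega)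
    have hnk1 := hn (k + 1) (by omega) hk1g
    have hpk1 := hp (k + 1) le_rfl hk1g
    have hqk1 := hq (k + 1) le_rfl hk1g
    have hepos1 := hepos (k + 1) hk1g
    rw [hB1, hb1, hbk, hBk, hek1, hek]
    have h0 : 1 + n k ≤ n k * n (k + 1) := by
      have := Nat.mul_le_mul_left (n k) hnk1
      omega
    have h1 : (1 + n k) * e (k + 1) ≤ n k * (n (k + 1) * e (k + 1)) := by
      have := Nat.mul_le_mul_right (e (k + 1)) h0
      calc (1 + n k) * e (k + 1) ≤ n k * n (k + 1) * e (k + 1) := this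
        _ = n k * (n (k + 1) * e (k + 1)) := by ring
    have h2 : q (k + 1) * e (k + 1) ≤ n (k + 1) * e (k + 1) * q (k + 1) := by
      have h3 := Nat.mul_le_mul_right (e (k + 1) * q (k + 1)) (show 1 ≤ n (k + 1) by omega)
      calc q (k + 1) * e (k + 1) = 1 * (e (k + 1) * q (k + 1)) := by ring
        _ ≤ n (k + 1) * (e (k + 1) * q (k + 1)) := h3
        _ = n (k + 1) * e (k + 1) * q (k + 1) := by ring
    calc (p (k + 1) * (1 + n k) + q (k + 1)) * e (k + 1)
        = p (k + 1) * ((1 + n k) * e (k + 1)) + q (k + 1) * e (k + 1) := by ring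
      _ ≤ p (k + 1) * (n k * (n (k + 1) * e (k + 1))) + n (k + 1) * e (k + 1) * q (k + 1) :=
          Nat.add_le_add (Nat.mul_le_mul_left _ h1) h2
  -- positivity of B
  have hBpos : ∀ j, k ≤ j → j ≤ g → 0 < B j := by
    intro j hj
    induction j, hj using Nat.le_induction with
    | base => intro _; rw [hBk]; exact hepos (k - 1) (by omega)
    | succ m hm ih =>
      intro hmg
      have hB1 := hB (m + 1) (by omega) hmg
      simp only [Nat.add_sub_cancel] at hB1
      have := hp (m + 1) (by omega) hmg
      have := ih (by omega)
      rw [hB1]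
      positivity
  -- main induction
  have main : ∀ j, k + 1 ≤ j → j ≤ g → b (k + 1) * B j ≤ b j * B (k + 1) := by
    intro j hj
    induction j, hj using Nat.le_induction with
    | base => intro _; rw [Nat.mul_comm]
    | succ m hm ih =>
      intro hmg
      have ihm := ih (by omega)
      have hB1 := hB (m + 1) (by omega) hmg
      have hb1 := hb (m + 1) (by omega) hmg
      simp only [Nat.add_sub_cancel] at hB1 hb1
      have hem : e m ≤ e (k + 1) := hemono m (k + 1) hm (by omega)
      have h2 : b (k + 1) * e m ≤ B (k + 1) :=
        le_trans (Nat.mul_le_mul_left _ hem) key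
      rw [hB1, hb1]
      calc b (k + 1) * (p (m + 1) * B m + e m * q (m + 1))
          = p (m + 1) * (b (k + 1) * B m) + (b (k + 1) * e m) * q (m + 1) := by ring
        _ ≤ p (m + 1) * (b m * B (k + 1)) + B (k + 1) * q (m + 1) := by
            exact Nat.add_le_add (Nat.mul_le_mul_left _ ihm) (Nat.mul_le_mul_right _ h2)
        _ = (p (m + 1) * b m + q (m + 1)) * B (k + 1) := by ring
  intro j hj hjg
  have h1 : (0 : ℚ) < B (k + 1) := by exact_mod_cast hBpos (k + 1) (by omega) hk1g
  have h2 : (0 : ℚ) < B j := by exact_mod_cast hBpos j (by omega) hjg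
  rw [div_le_div_iff₀ h1 h2]
  exact_mod_cast main j hj hjg
end
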